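/- K consists exactly of the maps z ↦ az with a ∈ R; in particular K is a cyclic group of order (p − 1)/2. -/

import Mathlib

instance (X : Type*) [DecidableEq X] : DecidableEq (OnePoint X) :=
  inferInstanceAs (DecidableEq (Option X))

/-- The translation `z ↦ z + a` on `ℤ/p ∪ {∞}`, fixing `∞`. -/
def ptrans (p : ℕ) (a : ZMod p) : Equiv.Perm (OnePoint (ZMod p)) :=
  Equiv.optionCongr (Equiv.addRight a)

/-- The map `z ↦ a z` on `ℤ/p ∪ {∞}`, fixing `∞`, for `a ≠ 0`. -/
def pmul (p : ℕ) [Fact p.Prime] (a : ZMod p) (ha : a ≠ 0) : Equiv.Perm (OnePoint (ZMod p)) :=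
  Equiv.optionCongr (Equiv.mulLeft₀ a ha)

/-- Multiplication by `a` extended to `ℤ/p ∪ {∞}` (with `a·∞ = ∞`). -/
def opSmul (p : ℕ) (a : ZMod p) : OnePoint (ZMod p) → OnePoint (ZMod p) :=
  fun x => Option.map (fun z => a * z) x

/-- Underlying function of the map `z ↦ -1/z`. -/
def negInvFun (p : ℕ) : OnePoint (ZMod p) → OnePoint (ZMod p)
  | Option.none => Option.some (0 : ZMod p)
  | Option.some z => if z = 0 then Option.none else Option.some (-z⁻¹ : ZMod p)

/-- The permutation `z ↦ -1/z` of `ℤ/p ∪ {∞}` (sending `0 ↦ ∞` and `∞ ↦ 0`). -/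
def negInvPerm (p : ℕ) [Fact p.Prime] : Equiv.Perm (OnePoint (ZMod p)) :=
  Function.Involutive.toPerm (negInvFun p) (by
    intro x
    match x with
    | Option.none => (simp [negInvFun]) <;> rfl
    | Option.some z =>
      by_cases hz : z = 0
      · (simp [negInvFun, hz]) <;> rfl
      · have h1 : (-z⁻¹ : ZMod p) ≠ 0 := by simp [hz]
        (simp [negInvFun, hz, h1, inv_neg, inv_inv]) <;> rfl)

/-- The involution `(0 ∞)(1 3)(2 6)(4 5)`. -/
def inv1 (p : ℕ) : Equiv.Perm (OnePoint (ZMod p)) :=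
  Equiv.swap ((0 : ZMod p) : OnePoint (ZMod p)) OnePoint.infty *
  Equiv.swap ((1 : ZMod p) : OnePoint (ZMod p)) ((3 : ZMod p) : OnePoint (ZMod p)) *
  Equiv.swap ((2 : ZMod p) : OnePoint (ZMod p)) ((6 : ZMod p) : OnePoint (ZMod p)) *
  Equiv.swap ((4 : ZMod p) : OnePoint (ZMod p)) ((5 : ZMod p) : OnePoint (ZMod p))

/-- The involution `(0 ∞)(1 5)(2 3)(4 6)`. -/
def inv2 (p : ℕ) : Equiv.Perm (OnePoint (ZMod p)) :=
  Equiv.swap ((0 : ZMod p) : OnePoint (ZMod p)) OnePoint.infty *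
  Equiv.swap ((1 : ZMod p) : OnePoint (ZMod p)) ((5 : ZMod p) : OnePoint (ZMod p)) *
  Equiv.swap ((2 : ZMod p) : OnePoint (ZMod p)) ((3 : ZMod p) : OnePoint (ZMod p)) *
  Equiv.swap ((4 : ZMod p) : OnePoint (ZMod p)) ((6 : ZMod p) : OnePoint (ZMod p))

/-- The set of nonzero squares in `ℤ/p`. -/
def Rset (p : ℕ) : Set (ZMod p) := {a | a ≠ 0 ∧ IsSquare a}

/-- The set of nonsquares in `(ℤ/p)*`. -/
def Nset (p : ℕ) : Set (ZMod p) := {a | a ≠ 0 ∧ ¬ IsSquare a}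

/-- The subgroup of elements of `G` fixing both `0` and `∞`. -/
def Ksub (p : ℕ) (G : Subgroup (Equiv.Perm (OnePoint (ZMod p)))) :
    Subgroup (Equiv.Perm (OnePoint (ZMod p))) :=
  (G ⊓ MulAction.stabilizer (α := OnePoint (ZMod p)) (Equiv.Perm (OnePoint (ZMod p)))
      (OnePoint.some (0 : ZMod p))) ⊓
    MulAction.stabilizer (α := OnePoint (ZMod p)) (Equiv.Perm (OnePoint (ZMod p)))
      OnePoint.infty


def equivStab {X : Type*} [DecidableEq X] (G : Subgroup (Equiv.Perm X)) (x : X) :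
    ↥(G ⊓ MulAction.stabilizer (Equiv.Perm X) x) ≃ MulAction.stabilizer (↥G) x where
  toFun g := ⟨⟨g.1, g.2.1⟩, g.2.2⟩
  invFun g := ⟨g.1.1, ⟨g.1.2, g.2⟩⟩
  left_inv _ := rfl
  right_inv _ := rfl

lemma orbit_stab_nat {Γ : Type*} [Group Γ] {β : Type*} [MulAction Γ β] (b : β) :
    Nat.card (MulAction.orbit Γ b) * Nat.card (MulAction.stabilizer Γ b) = Nat.card Γ := by
  rw [← Nat.card_prod]
  exact Nat.card_congr (MulAction.orbitProdStabilizerEquivGroup Γ b)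

section Cards
variable (p : ℕ) [Fact p.Prime] (G : Subgroup (Equiv.Perm (OnePoint (ZMod p))))

lemma card_onePoint : Nat.card (OnePoint (ZMod p)) = p + 1 := by
  have : Nat.card (OnePoint (ZMod p)) = Nat.card (Option (ZMod p)) := rfl
  rw [this]
  simp [Nat.card_eq_fintype_card, ZMod.card]

lemma card_Ginfty (hp2 : p ≠ 2)
    (htrans : ∀ x y : OnePoint (ZMod p), ∃ g ∈ G, g x = y)
    (hcard : Nat.card G = (p ^ 3 - p) / 2) :
    Nat.card ↥(G ⊓ MulAction.stabilizer (α := OnePoint (ZMod p)) (Equiv.Perm (OnePoint (ZMod p))) OnePoint.infty)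
      = p * ((p - 1) / 2) := by
  have hp := (Fact.out : p.Prime)
  have hp3 : 3 ≤ p := hp.two_le.lt_of_ne (Ne.symm hp2)
  set m := (p - 1) / 2 with hm
  have hpm : p - 1 = 2 * m := by
    obtain ⟨k, hk⟩ := hp.odd_of_ne_two hp2
    omega
  -- total card
  have hG : Nat.card G = (p + 1) * (p * m) := by
    rw [hcard]
    have h1 : p ^ 3 = (p + 1) * (p * (2 * m)) + p := by
      have : p = 2 * m + 1 := by omega
      rw [this]; ring
    have h2 : p ^ 3 - p = (p + 1) * (p * (2 * m)) := Nat.sub_eq_of_eq_add h1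
    rw [h2]
    have : (p + 1) * (p * (2 * m)) = 2 * ((p + 1) * (p * m)) := by ring
    rw [this, Nat.mul_div_cancel_left _ (by norm_num)]
  -- orbit of ∞ is everything
  have horb : MulAction.orbit (↥G) (OnePoint.infty : OnePoint (ZMod p)) = Set.univ := by
    ext y
    simp only [Set.mem_univ, iff_true, MulAction.mem_orbit_iff]
    obtain ⟨g, hg, hgy⟩ := htrans OnePoint.infty y
    exact ⟨⟨g, hg⟩, hgy⟩
  have hcardorb : Nat.card (MulAction.orbit (↥G) (OnePoint.infty : OnePoint (ZMod p))) = p + 1 := by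
    rw [horb, Nat.card_congr (Equiv.Set.univ _), card_onePoint]
  have hos := orbit_stab_nat (Γ := ↥G) (OnePoint.infty : OnePoint (ZMod p))
  rw [hcardorb, hG] at hos
  have hstab : Nat.card (MulAction.stabilizer (↥G) (OnePoint.infty : OnePoint (ZMod p))) = p * m :=
    Nat.eq_of_mul_eq_mul_left (by omega) hos
  rw [Nat.card_congr (equivStab G OnePoint.infty), hstab]

lemma card_Ksub (hp2 : p ≠ 2)
    (htrans : ∀ x y : OnePoint (ZMod p), ∃ g ∈ G, g x = y)
    (hcard : Nat.card G = (p ^ 3 - p) / 2)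
    (htransl : ∀ a : ZMod p, ptrans p a ∈ G) :
    Nat.card (Ksub p G) = (p - 1) / 2 := by
  classical
  have hp := (Fact.out : p.Prime)
  set m := (p - 1) / 2 with hm
  set H := G ⊓ MulAction.stabilizer (α := OnePoint (ZMod p)) (Equiv.Perm (OnePoint (ZMod p))) OnePoint.infty with hH
  have hHcard : Nat.card ↥H = p * m := card_Ginfty p G hp2 htrans hcard
  -- translations are in H
  have htrH : ∀ a : ZMod p, ptrans p a ∈ H := fun a => ⟨htransl a, rfl⟩
  -- orbit of (0 : ZMod p) under H is range of coe
  have horb : MulAction.orbit (↥H) (OnePoint.some (0 : ZMod p)) = Set.range OnePoint.some := by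
    ext y
    constructor
    · rintro ⟨g, rfl⟩
      have hfix : (g : Equiv.Perm (OnePoint (ZMod p))) OnePoint.infty = OnePoint.infty := g.2.2
      cases hy : (g : Equiv.Perm (OnePoint (ZMod p))) (OnePoint.some (0 : ZMod p)) with
      | infty =>
          exfalso
          have := (g : Equiv.Perm (OnePoint (ZMod p))).injective (hy.trans hfix.symm)
          exact (OnePoint.coe_ne_infty _) this
      | coe z => exact ⟨z, hy.symm⟩
    · rintro ⟨z, rfl⟩
      refine ⟨⟨ptrans p z, htrH z⟩, ?_⟩
      show ptrans p z (OnePoint.some (0 : ZMod p)) = OnePoint.some z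
      show Option.some (0 + z) = Option.some z
      rw [zero_add]
  have hcardorb : Nat.card (MulAction.orbit (↥H) (OnePoint.some (0 : ZMod p))) = p := by
    rw [horb, Nat.card_range_of_injective OnePoint.coe_injective, Nat.card_zmod]
  have hos := orbit_stab_nat (Γ := ↥H) (OnePoint.some (0 : ZMod p))
  rw [hcardorb, hHcard] at hos
  have hstab : Nat.card (MulAction.stabilizer (↥H) (OnePoint.some (0 : ZMod p))) = m :=
    Nat.eq_of_mul_eq_mul_left hp.pos hos
  have hKeq : Ksub p G = H ⊓ MulAction.stabilizer (Equiv.Perm (OnePoint (ZMod p)))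
      (OnePoint.some (0 : ZMod p)) := by
    rw [Ksub, hH, inf_right_comm]
  rw [hKeq, Nat.card_congr (equivStab H (OnePoint.some (0 : ZMod p))), hstab]

end Cards

section Aux2
variable (p : ℕ) [Fact p.Prime]

lemma ptrans_mul (a b : ZMod p) : ptrans p a * ptrans p b = ptrans p (a + b) := by
  ext x
  cases x with
  | infty => rfl
  | coe z => show Option.some (z + b + a) = Option.some (z + (a + b)); rw [add_assoc, add_comm b a]

lemma ptrans_zero : ptrans p 0 = 1 := by
  ext x; cases x with
  | infty => rfl
  | coe z => show Option.some (z + 0) = Option.some z; rw [add_zero]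

lemma pmul_mul (a b : ZMod p) (ha : a ≠ 0) (hb : b ≠ 0) :
    pmul p a ha * pmul p b hb = pmul p (a * b) (mul_ne_zero ha hb) := by
  ext x
  cases x with
  | infty => rfl
  | coe z => show Option.some (a * (b * z)) = Option.some (a * b * z); rw [mul_assoc]

end Aux2

section Main
variable (p : ℕ) [Fact p.Prime] (G : Subgroup (Equiv.Perm (OnePoint (ZMod p))))

lemma Ksub_elem_pmul (hp2 : p ≠ 2)
    (htrans : ∀ x y : OnePoint (ZMod p), ∃ g ∈ G, g x = y)
    (hcard : Nat.card G = (p ^ 3 - p) / 2)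
    (htransl : ∀ a : ZMod p, ptrans p a ∈ G)
    (σ : Equiv.Perm (OnePoint (ZMod p))) (hσ : σ ∈ Ksub p G) :
    ∃ (a : ZMod p) (ha : a ≠ 0), σ = pmul p a ha := by
  classical
  have hp := (Fact.out : p.Prime)
  have hp3 : 3 ≤ p := hp.two_le.lt_of_ne (Ne.symm hp2)
  set m := (p - 1) / 2 with hm
  set H := G ⊓ MulAction.stabilizer (α := OnePoint (ZMod p)) (Equiv.Perm (OnePoint (ZMod p))) OnePoint.infty with hH
  have hHcard : Nat.card ↥H = p * m := card_Ginfty p G hp2 htrans hcard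
  have htrH : ∀ a : ZMod p, ptrans p a ∈ H := fun a => ⟨htransl a, rfl⟩
  -- the translation subgroup
  let φ : Multiplicative (ZMod p) →* ↥H :=
    { toFun := fun a => ⟨ptrans p a.toAdd, htrH _⟩
      map_one' := Subtype.ext (ptrans_zero p)
      map_mul' := fun a b => Subtype.ext (ptrans_mul p a.toAdd b.toAdd).symm }
  have hφinj : Function.Injective φ := by
    intro a b hab
    have := congrArg (fun g : ↥H => (g : Equiv.Perm (OnePoint (ZMod p))) (OnePoint.some (0 : ZMod p))) hab
    simp only [φ, MonoidHom.coe_mk, OneHom.coe_mk] at this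
    have h2 : Option.some ((0 : ZMod p) + a.toAdd) = Option.some ((0 : ZMod p) + b.toAdd) := this
    have h3 : a.toAdd = b.toAdd := by simpa using h2
    exact h3
  have hT : Nat.card ↥φ.range = p := by
    have h1 : Nat.card ↥φ.range = Nat.card ↥(Set.range φ) := rfl
    rw [h1, Nat.card_range_of_injective hφinj]
    have : Nat.card (Multiplicative (ZMod p)) = Nat.card (ZMod p) := rfl
    rw [this, Nat.card_zmod]
  have hm0 : m ≠ 0 := by omega
  have hmp : m < p := by omega
  have hfact : (Nat.card ↥H).factorization p = 1 := by
    rw [hHcard, Nat.factorization_mul hp.pos.ne' hm0]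
    have h1 : p.factorization p = 1 := Nat.Prime.factorization_self hp
    have h2 : m.factorization p = 0 :=
      Nat.factorization_eq_zero_of_not_dvd (fun hdvd => absurd (Nat.le_of_dvd (by omega) hdvd) (by omega))
    simp [h1, h2]
  let P : Sylow p ↥H := Sylow.ofCard φ.range (by rw [hT, hfact, pow_one])
  have hPcoe : (P : Subgroup ↥H) = φ.range := rfl
  -- count Sylows
  have hindex : (P : Subgroup ↥H).index = m := by
    have h1 := Subgroup.index_mul_card (P : Subgroup ↥H)
    rw [hPcoe] at h1 ⊢
    rw [hT, hHcard, mul_comm p m] at h1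
    exact Nat.eq_of_mul_eq_mul_right hp.pos h1
  have hmod := card_sylow_modEq_one p ↥H
  have hdvd := Sylow.card_dvd_index P
  rw [hindex] at hdvd
  have hn1 : Nat.card (Sylow p ↥H) = 1 := by
    have hle : Nat.card (Sylow p ↥H) ≤ m := Nat.le_of_dvd (by omega) hdvd
    have := hmod
    unfold Nat.ModEq at this
    rw [Nat.mod_eq_of_lt (by omega), Nat.mod_eq_of_lt (by omega)] at this
    omega
  have hsub : Subsingleton (Sylow p ↥H) := (Nat.card_eq_one_iff_unique.mp hn1).1
  have hnormal : (P : Subgroup ↥H).Normal := by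
    rw [← Subgroup.normalizer_eq_top_iff, eq_top_iff]
    intro g _
    exact Sylow.smul_eq_iff_mem_normalizer.mp (@Subsingleton.elim _ hsub _ _)
  -- σ as element of H
  have hσG : σ ∈ G := hσ.1.1
  have hσ0 : σ (OnePoint.some (0 : ZMod p)) = OnePoint.some (0 : ZMod p) := hσ.1.2
  have hσi : σ OnePoint.infty = OnePoint.infty := hσ.2
  set s : ↥H := ⟨σ, ⟨hσG, hσi⟩⟩ with hs
  have ht : φ (Multiplicative.ofAdd (1 : ZMod p)) ∈ (P : Subgroup ↥H) := by
    rw [hPcoe]; exact ⟨_, rfl⟩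
  have hconjmem := hnormal.conj_mem _ ht s
  rw [hPcoe] at hconjmem
  obtain ⟨b, hb⟩ := hconjmem
  set b' := b.toAdd with hb'
  have hperm : ptrans p b' = σ * ptrans p 1 * σ⁻¹ := congrArg Subtype.val hb
  -- key commutation
  have hcomm : ∀ x, σ (ptrans p 1 x) = ptrans p b' (σ x) := by
    intro x
    have := congrArg (fun f : Equiv.Perm (OnePoint (ZMod p)) => f (σ x)) hperm
    simpa [Equiv.Perm.mul_apply] using this.symm
  -- b' ≠ 0
  have hb0 : b' ≠ 0 := by
    intro h0
    rw [h0, ptrans_zero] at hperm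
    have h1 : ptrans p 1 = 1 := by
      have := congrArg (fun f => σ⁻¹ * f * σ) hperm
      simpa [mul_assoc] using this.symm
    have := congrArg (fun f : Equiv.Perm (OnePoint (ZMod p)) => f (OnePoint.some (0 : ZMod p))) h1
    have h2 : Option.some ((0 : ZMod p) + 1) = Option.some (0 : ZMod p) := this
    have h3 : (1 : ZMod p) = 0 := by simpa using h2
    exact one_ne_zero h3
  -- compute σ on naturals
  have hnat : ∀ n : ℕ, σ (OnePoint.some ((n : ZMod p))) = OnePoint.some ((n : ZMod p) * b') := by
    intro n
    induction n with
    | zero => simpa using hσ0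
    | succ n ih =>
        have e1 : (OnePoint.some (((n : ℕ) + 1 : ℕ) : ZMod p)) = ptrans p 1 (OnePoint.some ((n : ZMod p))) := by
          show _ = Option.some ((n : ZMod p) + 1)
          push_cast
          rfl
        rw [e1, hcomm, ih]
        show Option.some ((n : ZMod p) * b' + b') = _
        congr 1
        push_cast
        ring
  refine ⟨b', hb0, ?_⟩
  ext x
  cases x with
  | infty => exact hσi
  | coe z =>
      have hz : ((z.val : ℕ) : ZMod p) = z := ZMod.natCast_rightInverse z
      have := hnat z.val
      rw [hz] at this
      rw [this]
      show Option.some (z * b') = Option.some (b' * z)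
      rw [mul_comm]

end Main

section Psi
variable (p : ℕ) [Fact p.Prime]

def fval (σ : Equiv.Perm (OnePoint (ZMod p))) : ZMod p :=
  Option.getD (α := ZMod p) (σ (OnePoint.some (1 : ZMod p))) 0

lemma fval_pmul (a : ZMod p) (ha : a ≠ 0) : fval p (pmul p a ha) = a := by
  show Option.getD (Option.some (a * 1)) 0 = a
  simp

lemma pmul_congr {a b : ZMod p} (h : a = b) (ha : a ≠ 0) (hb : b ≠ 0) :
    pmul p a ha = pmul p b hb := by subst h; rfl

lemma pmul_inj {a b : ZMod p} {ha : a ≠ 0} {hb : b ≠ 0} (h : pmul p a ha = pmul p b hb) :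
    a = b := by
  have := congrArg (fun f : Equiv.Perm (OnePoint (ZMod p)) => f (OnePoint.some (1 : ZMod p))) h
  have h2 : Option.some (a * 1) = Option.some (b * 1) := this
  simpa using h2

lemma fval_one : fval p (1 : Equiv.Perm (OnePoint (ZMod p))) = 1 := rfl

def psiHom (K : Subgroup (Equiv.Perm (OnePoint (ZMod p))))
    (hne : ∀ σ : ↥K, fval p ↑σ ≠ 0)
    (heq : ∀ σ : ↥K, (↑σ : Equiv.Perm (OnePoint (ZMod p))) = pmul p (fval p ↑σ) (hne σ)) :
    ↥K →* (ZMod p)ˣ where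
  toFun σ := Units.mk0 (fval p ↑σ) (hne σ)
  map_one' := by
    apply Units.ext
    show fval p ((1 : ↥K) : Equiv.Perm (OnePoint (ZMod p))) = 1
    rw [OneMemClass.coe_one, fval_one]
  map_mul' σ τ := by
    apply Units.ext
    show fval p ↑(σ * τ) = fval p ↑σ * fval p ↑τ
    have h3 := heq (σ * τ)
    have h4 : (↑(σ * τ) : Equiv.Perm (OnePoint (ZMod p)))
        = pmul p (fval p ↑σ * fval p ↑τ) (mul_ne_zero (hne σ) (hne τ)) := by
      rw [Subgroup.coe_mul]
      conv_lhs => rw [heq σ, heq τ]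
      rw [pmul_mul]
    exact pmul_inj p (h3.symm.trans h4)

lemma psiHom_inj (K : Subgroup (Equiv.Perm (OnePoint (ZMod p))))
    (hne : ∀ σ : ↥K, fval p ↑σ ≠ 0) (heq : ∀ σ, _) :
    Function.Injective (psiHom p K hne heq) := by
  intro σ τ h
  have h1 : fval p ↑σ = fval p ↑τ := congrArg Units.val h
  have h2 : (↑σ : Equiv.Perm (OnePoint (ZMod p))) = ↑τ := by
    rw [heq σ, heq τ]; exact pmul_congr p h1 _ _
  exact Subtype.ext h2

end Psi


theorem K_is_cyclic_of_mult_maps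
    (p : ℕ) [Fact p.Prime] (hp2 : p ≠ 2)
    (G : Subgroup (Equiv.Perm (OnePoint (ZMod p))))
    (htrans : ∀ x y : OnePoint (ZMod p), ∃ g ∈ G, g x = y)
    (hcard : Nat.card G = (p ^ 3 - p) / 2)
    (htransl : ∀ a : ZMod p, ptrans p a ∈ G) :
    (∀ σ : Equiv.Perm (OnePoint (ZMod p)),
        σ ∈ Ksub p G ↔ ∃ (a : ZMod p) (ha : a ≠ 0), IsSquare a ∧ σ = pmul p a ha) ∧
      IsCyclic (Ksub p G) ∧ Nat.card (Ksub p G) = (p - 1) / 2 := by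
  classical
  have hp := (Fact.out : p.Prime)
  have hp3 : 3 ≤ p := hp.two_le.lt_of_ne (Ne.symm hp2)
  set m := (p - 1) / 2 with hm
  have hm2 : p / 2 = m := by
    obtain ⟨k, hk⟩ := hp.odd_of_ne_two hp2
    omega
  have hm0 : 0 < m := by
    obtain ⟨k, hk⟩ := hp.odd_of_ne_two hp2
    omega
  set K := Ksub p G with hKdef
  have hK : Nat.card ↥K = m := card_Ksub p G hp2 htrans hcard htransl
  have hform := Ksub_elem_pmul p G hp2 htrans hcard htransl
  have hne : ∀ σ : ↥K, fval p ↑σ ≠ 0 := by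
    intro σ
    obtain ⟨a, ha, h⟩ := hform σ σ.2
    have hf : fval p ↑σ = a := by rw [h, fval_pmul]
    rw [hf]; exact ha
  have heq : ∀ σ : ↥K, (↑σ : Equiv.Perm (OnePoint (ZMod p))) = pmul p (fval p ↑σ) (hne σ) := by
    intro σ
    obtain ⟨a, ha, h⟩ := hform σ σ.2
    have hf : fval p ↑σ = a := by rw [h, fval_pmul]
    conv_lhs => rw [h]
    exact pmul_congr p hf.symm _ _
  set ψ := psiHom p K hne heq with hψdef
  have hψinj : Function.Injective ψ := psiHom_inj p K hne heq
  have hψval : ∀ σ : ↥K, (ψ σ : ZMod p) = fval p ↑σ := fun _ => rfl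
  -- counting
  set F : Finset (ZMod p)ˣ := Finset.image (fun σ : ↥K => ψ σ) Finset.univ with hF
  have hFcard : F.card = m := by
    rw [hF, Finset.card_image_of_injective _ hψinj, Finset.card_univ,
      ← Nat.card_eq_fintype_card, hK]
  set S : Finset (ZMod p)ˣ := Finset.univ.filter (fun x => x ^ m = 1) with hS
  have hFS : F ⊆ S := by
    intro x hx
    rw [hF, Finset.mem_image] at hx
    obtain ⟨σ, _, rfl⟩ := hx
    rw [hS, Finset.mem_filter]
    refine ⟨Finset.mem_univ _, ?_⟩
    rw [← map_pow]
    have : σ ^ m = 1 := by rw [← hK]; exact pow_card_eq_one'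
    rw [this, map_one]
  have hScard : S.card ≤ m := IsCyclic.card_pow_eq_one_le hm0
  have hFSeq : F = S := Finset.eq_of_subset_of_card_le hFS (by rw [hFcard]; exact hScard)
  -- main iff
  have hiff : ∀ σ : Equiv.Perm (OnePoint (ZMod p)),
      σ ∈ Ksub p G ↔ ∃ (a : ZMod p) (ha : a ≠ 0), IsSquare a ∧ σ = pmul p a ha := by
    intro σ
    constructor
    · intro hσ
      obtain ⟨a, ha, h⟩ := hform σ hσ
      refine ⟨a, ha, ?_, h⟩
      set σK : ↥K := ⟨σ, hσ⟩ with hσK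
      have hu : (ψ σK : ZMod p) = a := by
        rw [hψval]
        show fval p ↑σK = a
        rw [hσK]
        show fval p σ = a
        rw [h, fval_pmul]
      have huF : ψ σK ∈ F := by
        rw [hF, Finset.mem_image]
        exact ⟨σK, Finset.mem_univ _, rfl⟩
      rw [hFSeq, hS, Finset.mem_filter] at huF
      have hpow : (ψ σK) ^ m = 1 := huF.2
      have hpow' : a ^ m = 1 := by
        have := congrArg Units.val hpow
        rw [Units.val_pow_eq_pow_val, hu] at this
        simpa using this
      rw [ZMod.euler_criterion p ha, hm2]
      exact hpow'
    · rintro ⟨a, ha, hsq, rfl⟩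
      set u : (ZMod p)ˣ := Units.mk0 a ha with hu
      have hupow : u ^ m = 1 := by
        have := (ZMod.euler_criterion p ha).mp hsq
        rw [hm2] at this
        apply Units.ext
        rw [Units.val_pow_eq_pow_val]
        simpa [hu] using this
      have huS : u ∈ S := by rw [hS, Finset.mem_filter]; exact ⟨Finset.mem_univ _, hupow⟩
      rw [← hFSeq, hF, Finset.mem_image] at huS
      obtain ⟨σ', _, hσ'⟩ := huS
      have hfa : fval p ↑σ' = a := by
        have := congrArg Units.val hσ'
        rw [hψval] at this
        simpa [hu] using this
      have : (↑σ' : Equiv.Perm (OnePoint (ZMod p))) = pmul p a ha := by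
        rw [heq σ']; exact pmul_congr p hfa _ _
      rw [← this]
      exact σ'.2
  refine ⟨hiff, ?_, hK⟩
  -- cyclic
  have hcyc : IsCyclic ↥(ψ.range) := inferInstance
  let e : ↥K ≃* ψ.range := MonoidHom.ofInjective hψinj
  exact isCyclic_of_surjective e.symm e.symm.surjective
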